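/- Let L be an e-cyclic residuated lattice, let S ⊆ L, and let M be the submonoid of (L, ·, e) generated by |S| = {|s| : s ∈ S}. Then C[S] = C[|S|] = {x ∈ L : h ≤ x ≤ h\e for some h ∈ M} = {x ∈ L : h ≤ |x| for some h ∈ M}. In particular, the set {x ∈ L : h ≤ x ≤ h\e for some h ∈ M} is a convex subalgebra of L that contains S and is contained in every convex subalgebra of L containing S. -/
import Mathlib


universe u

/-- A residuated lattice: a lattice-ordered monoid with left and right residuals.
`ldiv x z` is `x \ z` and `rdiv z y` is `z / y`. -/
class ResiduatedLattice (α : Type u) extends Lattice α, Monoid α where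
  ldiv : α → α → α
  rdiv : α → α → α
  mul_le_iff_le_ldiv : ∀ x y z : α, x * y ≤ z ↔ y ≤ ldiv x z
  mul_le_iff_le_rdiv : ∀ x y z : α, x * y ≤ z ↔ x ≤ rdiv z y

namespace ResiduatedLattice

variable {α : Type u} [ResiduatedLattice α]

/-- `L` is e-cyclic if `x \ e = e / x` for all `x`. -/
def ECyclic (α : Type u) [ResiduatedLattice α] : Prop :=
  ∀ x : α, ldiv x 1 = rdiv 1 x

/-- Absolute value: `|x| = x ⊓ (e / x) ⊓ e`. -/
def absv (x : α) : α := x ⊓ rdiv 1 x ⊓ 1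

/-- A convex subalgebra: contains `e`, closed under all the operations, and order-convex. -/
structure IsConvexSubalgebra (H : Set α) : Prop where
  one_mem : (1 : α) ∈ H
  mul_mem : ∀ ⦃x⦄, x ∈ H → ∀ ⦃y⦄, y ∈ H → x * y ∈ H
  sup_mem : ∀ ⦃x⦄, x ∈ H → ∀ ⦃y⦄, y ∈ H → x ⊔ y ∈ H
  inf_mem : ∀ ⦃x⦄, x ∈ H → ∀ ⦃y⦄, y ∈ H → x ⊓ y ∈ H
  ldiv_mem : ∀ ⦃x⦄, x ∈ H → ∀ ⦃y⦄, y ∈ H → ldiv x y ∈ H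
  rdiv_mem : ∀ ⦃x⦄, x ∈ H → ∀ ⦃y⦄, y ∈ H → rdiv x y ∈ H
  convex : ∀ ⦃a⦄, a ∈ H → ∀ ⦃b⦄, b ∈ H → ∀ ⦃x⦄, a ≤ x → x ≤ b → x ∈ H

/-- `C[S]`: the smallest convex subalgebra containing `S`. -/
def convexClosure (S : Set α) : Set α :=
  ⋂₀ {H : Set α | IsConvexSubalgebra H ∧ S ⊆ H}

end ResiduatedLattice

open ResiduatedLattice

namespace StmtAux

open ResiduatedLattice

variable {α : Type u} [ResiduatedLattice α]

lemma mulmono {a b c d : α} (h1 : a ≤ b) (h2 : c ≤ d) : a * c ≤ b * d := by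
  have hbd : b * c ≤ b * d :=
    (mul_le_iff_le_ldiv b c (b*d)).mpr (le_trans h2 ((mul_le_iff_le_ldiv b d (b*d)).mp le_rfl))
  have hac : a * c ≤ b * c :=
    (mul_le_iff_le_rdiv a c (b*c)).mpr (le_trans h1 ((mul_le_iff_le_rdiv b c (b*c)).mp le_rfl))
  exact le_trans hac hbd

lemma mul_le_one' {a b : α} (h1 : a ≤ 1) (h2 : b ≤ 1) : a * b ≤ 1 := by
  have := mulmono h1 h2; rwa [one_mul] at this

lemma absv_le_self (x : α) : absv x ≤ x := le_trans inf_le_left inf_le_left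
lemma absv_le_one (x : α) : absv x ≤ 1 := inf_le_right
lemma absv_mul_self_le_one (x : α) : absv x * x ≤ 1 :=
  (mul_le_iff_le_rdiv _ _ _).mpr (le_trans inf_le_left inf_le_right)

lemma comm1 (hec : ECyclic α) {a b : α} : a * b ≤ 1 ↔ b * a ≤ 1 := by
  rw [mul_le_iff_le_ldiv, hec a, ← mul_le_iff_le_rdiv]

lemma le_absv_iff {h x : α} (h1 : h ≤ 1) : h ≤ absv x ↔ (h ≤ x ∧ x ≤ ldiv h 1) := by
  unfold absv
  rw [le_inf_iff, le_inf_iff, ← mul_le_iff_le_rdiv, mul_le_iff_le_ldiv]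
  tauto

lemma closure_le_one {S : Set α} {h : α} (hh : h ∈ Submonoid.closure (absv '' S)) : h ≤ 1 := by
  induction hh using Submonoid.closure_induction with
  | mem x hx => obtain ⟨s, _, rfl⟩ := hx; exact absv_le_one s
  | one => exact le_rfl
  | mul x y _ _ hx hy => exact mul_le_one' hx hy

variable (M : Submonoid α)

/-- The candidate set T. -/
def T : Set α := {x : α | ∃ h ∈ M, h ≤ x ∧ x ≤ ldiv h 1}

lemma mem_T_iff {x : α} : x ∈ T M ↔ ∃ h ∈ M, h ≤ x ∧ h * x ≤ 1 := by
  unfold T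
  simp only [Set.mem_setOf_eq, mul_le_iff_le_ldiv]

variable {M}

lemma mem_T_of {w x : α} (hw : w ∈ M) (h1 : w ≤ x) (h2 : w * x ≤ 1) : x ∈ T M :=
  (mem_T_iff M).mpr ⟨w, hw, h1, h2⟩

lemma isConvex_T (hec : ECyclic α) (hneg : ∀ h ∈ M, h ≤ (1:α)) :
    IsConvexSubalgebra (T M) := by
  have key : ∀ x ∈ T M, ∃ h ∈ M, h ≤ x ∧ h * x ≤ 1 ∧ x * h ≤ 1 ∧ h ≤ 1 := by
    intro x hx
    obtain ⟨h, hhM, h1, h2⟩ := (mem_T_iff M).mp hx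
    exact ⟨h, hhM, h1, h2, (comm1 hec).mp h2, hneg h hhM⟩
  constructor
  · -- one_mem
    exact mem_T_of M.one_mem le_rfl (by rw [one_mul])
  · -- mul_mem
    intro x hx y hy
    obtain ⟨h, hhM, hle, hx1, xh1, h1⟩ := key x hx
    obtain ⟨k, hkM, kle, ky1, yk1, k1⟩ := key y hy
    refine mem_T_of (M.mul_mem hhM (M.mul_mem hkM hhM)) ?_ ?_
    · exact mulmono hle (le_trans (by simpa using mulmono (le_refl k) h1) kle)
    · have e1 : h * (k * h) * (x * y) = h * (k * (h * x * y)) := by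
        simp [mul_assoc]
      rw [e1]
      have s1 : h * x * y ≤ y := by simpa using mulmono hx1 (le_refl y)
      have s2 : k * (h * x * y) ≤ 1 := le_trans (mulmono (le_refl k) s1) ky1
      exact mul_le_one' h1 s2
  · -- sup_mem
    intro x hx y hy
    obtain ⟨h, hhM, hle, hx1, xh1, h1⟩ := key x hx
    obtain ⟨k, hkM, kle, ky1, yk1, k1⟩ := key y hy
    refine mem_T_of (M.mul_mem hhM hkM) (le_trans (by simpa using mulmono (le_refl h) k1) (le_trans hle le_sup_left)) ?_
    rw [mul_le_iff_le_ldiv, sup_le_iff, ← mul_le_iff_le_ldiv, ← mul_le_iff_le_ldiv]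
    constructor
    · have : h * k * x ≤ h * x := by
        rw [mul_assoc]; exact mulmono (le_refl h) (by simpa using mulmono k1 (le_refl x))
      exact le_trans this hx1
    · have : h * k * y ≤ k * y := by
        rw [mul_assoc]; simpa using mulmono h1 (le_refl (k*y))
      exact le_trans this ky1
  · -- inf_mem
    intro x hx y hy
    obtain ⟨h, hhM, hle, hx1, xh1, h1⟩ := key x hx
    obtain ⟨k, hkM, kle, ky1, yk1, k1⟩ := key y hy
    refine mem_T_of (M.mul_mem hhM hkM) (le_inf ?_ ?_) ?_
    · exact le_trans (by simpa using mulmono (le_refl h) k1) hle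
    · exact le_trans (by simpa using mulmono h1 (le_refl k)) kle
    · have : h * k * (x ⊓ y) ≤ k * y := by
        rw [mul_assoc]
        exact le_trans (mulmono h1 (mulmono (le_refl k) inf_le_right)) (by rw [one_mul])
      exact le_trans this ky1
  · -- ldiv_mem
    intro x hx y hy
    obtain ⟨h, hhM, hle, hx1, xh1, h1⟩ := key x hx
    obtain ⟨k, hkM, kle, ky1, yk1, k1⟩ := key y hy
    refine mem_T_of (M.mul_mem (M.mul_mem hhM hkM) (M.mul_mem hkM hhM)) ?_ ?_
    · -- (h*k)*(k*h) ≤ h*k ≤ ldiv x y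
      have u1 : h * k * (k * h) ≤ h * k := by
        simpa using mulmono (le_refl (h*k)) (mul_le_one' k1 h1)
      have u2 : h * k ≤ ldiv x y := by
        rw [← mul_le_iff_le_ldiv, ← mul_assoc]
        exact le_trans (by simpa using mulmono xh1 (le_refl k)) kle
      exact le_trans u1 u2
    · -- u * (x\y) ≤ (k*x)*(x\y) ≤ k*y ≤ 1
      have u3 : h * k * (k * h) ≤ k * h := by
        simpa using mulmono (mul_le_one' h1 k1) (le_refl (k*h))
      have u4 : k * h ≤ k * x := mulmono (le_refl k) hle
      have u5 : k * x * ldiv x y ≤ k * y := by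
        rw [mul_assoc]
        exact mulmono (le_refl k) ((mul_le_iff_le_ldiv x (ldiv x y) y).mpr le_rfl)
      exact le_trans (mulmono (le_trans u3 u4) (le_refl _)) (le_trans u5 ky1)
  · -- rdiv_mem : rdiv x y ∈ T
    intro x hx y hy
    obtain ⟨h, hhM, hle, hx1, xh1, h1⟩ := key x hx
    obtain ⟨k, hkM, kle, ky1, yk1, k1⟩ := key y hy
    refine mem_T_of (M.mul_mem (M.mul_mem hkM hhM) (M.mul_mem hhM hkM)) ?_ ?_
    · -- (k*h)*(h*k) ≤ h*k ≤ rdiv x y  since (h*k)*y ≤ h*(k*y) ≤ h ≤ x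
      have u1 : k * h * (h * k) ≤ h * k := by
        simpa using mulmono (mul_le_one' k1 h1) (le_refl (h*k))
      have u2 : h * k ≤ rdiv x y := by
        rw [← mul_le_iff_le_rdiv, mul_assoc]
        exact le_trans (mulmono (le_refl h) ky1) (le_trans (by rw [mul_one]) hle)
      exact le_trans u1 u2
    · -- u ≤ k*h, and (k*h)*(x/y) ≤ 1 since (x/y)*(k*h) ≤ 1
      have u3 : k * h * (h * k) ≤ k * h := by
        simpa using mulmono (le_refl (k*h)) (mul_le_one' h1 k1)
      have u4 : rdiv x y * (k * h) ≤ 1 := by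
        have q1 : rdiv x y * k ≤ x := le_trans (mulmono (le_refl _) kle)
          ((mul_le_iff_le_rdiv (rdiv x y) y x).mpr le_rfl)
        have : rdiv x y * k * h ≤ x * h := mulmono q1 (le_refl h)
        rw [mul_assoc] at this
        exact le_trans this xh1
      have u5 : k * h * rdiv x y ≤ 1 := (comm1 hec).mpr u4
      exact le_trans (mulmono u3 (le_refl _)) u5
  · -- convex
    intro a ha b hb x hax hxb
    obtain ⟨h, hhM, hle, hx1, xh1, h1⟩ := key a ha
    obtain ⟨k, hkM, kle, ky1, yk1, k1⟩ := key b hb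
    refine mem_T_of (M.mul_mem hhM hkM) ?_ ?_
    · exact le_trans (by simpa using mulmono (le_refl h) k1) (le_trans hle hax)
    · have : h * k * x ≤ k * b := by
        rw [mul_assoc]
        exact le_trans (mulmono h1 (mulmono (le_refl k) hxb)) (by rw [one_mul])
      exact le_trans this ky1

lemma S_subset_T {S : Set α} (hMc : M = Submonoid.closure (absv '' S)) : S ⊆ T M := by
  intro s hs
  refine mem_T_of ?_ (absv_le_self s) (absv_mul_self_le_one s)
  rw [hMc]; exact Submonoid.subset_closure ⟨s, hs, rfl⟩

lemma absS_subset_T {S : Set α} (hMc : M = Submonoid.closure (absv '' S)) : absv '' S ⊆ T M := by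
  rintro _ ⟨s, hs, rfl⟩
  refine mem_T_of ?_ le_rfl (mul_le_one' (absv_le_one s) (absv_le_one s))
  rw [hMc]; exact Submonoid.subset_closure ⟨s, hs, rfl⟩

lemma T_subset_of_absS {S : Set α} (hMc : M = Submonoid.closure (absv '' S))
    {H : Set α} (hH : IsConvexSubalgebra H) (hG : absv '' S ⊆ H) : T M ⊆ H := by
  have hMH : ∀ h ∈ Submonoid.closure (absv '' S), h ∈ H := by
    intro h hh
    induction hh using Submonoid.closure_induction with
    | mem z hz => exact hG hz
    | one => exact hH.one_mem
    | mul a b _ _ ha hb => exact hH.mul_mem ha hb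
  rintro x ⟨h, hhM, h1, h2⟩
  have hhH : h ∈ H := hMH h (hMc ▸ hhM)
  exact hH.convex hhH (hH.ldiv_mem hhH hH.one_mem) h1 h2

lemma T_subset_of_S {S : Set α} (hMc : M = Submonoid.closure (absv '' S))
    {H : Set α} (hH : IsConvexSubalgebra H) (hS : S ⊆ H) : T M ⊆ H := by
  refine T_subset_of_absS hMc hH ?_
  rintro _ ⟨s, hs, rfl⟩
  have hsH : s ∈ H := hS hs
  exact hH.inf_mem (hH.inf_mem hsH (hH.rdiv_mem hH.one_mem hsH)) hH.one_mem

end StmtAux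


/-- description of the convex subalgebra generated by a set `S` in an
e-cyclic residuated lattice, via the submonoid `M` generated by `|S|`. -/
theorem stmt0 {α : Type u} [ResiduatedLattice α] (hec : ECyclic α) (S : Set α)
    (M : Submonoid α) (hM : M = Submonoid.closure (absv '' S)) :
    convexClosure S = convexClosure (absv '' S) ∧
    convexClosure S = {x : α | ∃ h ∈ M, h ≤ x ∧ x ≤ ldiv h 1} ∧
    convexClosure S = {x : α | ∃ h ∈ M, h ≤ absv x} ∧
    IsConvexSubalgebra {x : α | ∃ h ∈ M, h ≤ x ∧ x ≤ ldiv h 1} ∧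
    S ⊆ {x : α | ∃ h ∈ M, h ≤ x ∧ x ≤ ldiv h 1} ∧
    ∀ H : Set α, IsConvexSubalgebra H → S ⊆ H →
      {x : α | ∃ h ∈ M, h ≤ x ∧ x ≤ ldiv h 1} ⊆ H := by
  subst hM
  set M := Submonoid.closure (absv '' S) with hMc
  have hneg : ∀ h ∈ M, h ≤ (1:α) := fun h hh => StmtAux.closure_le_one hh
  have hconv : IsConvexSubalgebra (StmtAux.T M) := StmtAux.isConvex_T hec hneg
  have hSsub : S ⊆ StmtAux.T M := StmtAux.S_subset_T rfl
  have habsSsub : absv '' S ⊆ StmtAux.T M := StmtAux.absS_subset_T rfl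
  have hTeq : (StmtAux.T M) = {x : α | ∃ h ∈ M, h ≤ x ∧ x ≤ ldiv h 1} := rfl
  have hmin : ∀ H : Set α, IsConvexSubalgebra H → S ⊆ H → StmtAux.T M ⊆ H :=
    fun H hH hS => StmtAux.T_subset_of_S rfl hH hS
  have hccS : convexClosure S = StmtAux.T M := by
    apply le_antisymm
    · intro x hx
      exact hx (StmtAux.T M) ⟨hconv, hSsub⟩
    · intro x hx H hH
      exact hmin H hH.1 hH.2 hx
  have hccA : convexClosure (absv '' S) = StmtAux.T M := by
    apply le_antisymm
    · intro x hx
      exact hx (StmtAux.T M) ⟨hconv, habsSsub⟩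
    · intro x hx H hH
      exact StmtAux.T_subset_of_absS rfl hH.1 hH.2 hx
  have hTabs : (StmtAux.T M) = {x : α | ∃ h ∈ M, h ≤ absv x} := by
    ext x
    constructor
    · rintro ⟨h, hhM, h1, h2⟩
      exact ⟨h, hhM, (StmtAux.le_absv_iff (hneg h hhM)).mpr ⟨h1, h2⟩⟩
    · rintro ⟨h, hhM, hle⟩
      obtain ⟨h1, h2⟩ := (StmtAux.le_absv_iff (hneg h hhM)).mp hle
      exact ⟨h, hhM, h1, h2⟩
  refine ⟨hccS.trans hccA.symm, hccS, hccS.trans hTabs, hconv, hSsub, hmin⟩
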